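/- Let R be a Noetherian ring of characteristic p, I₁,…,I_t ideals, and J an ideal with I₁,…,I_t ⊆ √J. Then Vol_F^J(I₁,…,I_t) ≤ Vol_F^J(I₁,…,I_{t-1}) · c^J(I_t), where c^J(I_t) is the F-threshold of I_t with respect to J. -/

import Mathlib

open Ideal Filter MeasureTheory

/-- The `q`-th Frobenius power of an ideal: the ideal generated by `q`-th powers of its
elements (used with `q = p ^ e`). -/
def Ideal.frobPow {R : Type*} [CommRing R] (J : Ideal R) (q : ℕ) : Ideal R :=
  Ideal.span ((fun a => a ^ q) '' (J : Set R))

/-- The set `V` of exponent vectors `a ∈ ℕ^t` with `I₁^{a₁} ⋯ I_t^{a_t} ⊄ J'`. -/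
def Vnu {R : Type*} [CommRing R] {t : ℕ} (I : Fin t → Ideal R) (J' : Ideal R) :
    Set (Fin t → ℕ) :=
  {a | ¬ (∏ i, I i ^ a i) ≤ J'}

/-- `ν_I^{J'} = max {n : I^n ⊄ J'}`. -/
noncomputable def nuF {R : Type*} [CommRing R] (I J' : Ideal R) : ℕ :=
  sSup {n : ℕ | ¬ I ^ n ≤ J'}

section Aux

variable {R : Type*} [CommRing R]

lemma le_radical_frobPow (J : Ideal R) (q : ℕ) : J ≤ (J.frobPow q).radical := fun x hx =>
  Ideal.mem_radical_iff.2 ⟨q, Ideal.subset_span ⟨x, hx, rfl⟩⟩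

lemma pow_le_frobPow [IsNoetherianRing R] {K J : Ideal R} (hK : K ≤ J.radical) (q : ℕ) :
    ∃ n, K ^ n ≤ J.frobPow q := by
  obtain ⟨n, hn⟩ := Ideal.exists_radical_pow_le_of_fg (J.frobPow q) (IsNoetherian.noetherian _)
  refine ⟨n, le_trans (Ideal.pow_right_mono ?_ n) hn⟩
  exact le_trans hK (le_trans (Ideal.radical_mono (le_radical_frobPow J q))
    (le_of_eq (Ideal.radical_idem _)))

lemma prod_le_factor {t : ℕ} (I : Fin t → Ideal R) (a : Fin t → ℕ) (j : Fin t) :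
    (∏ i, I i ^ a i) ≤ I j ^ a j :=
  le_trans Ideal.prod_le_inf (Finset.inf_le (Finset.mem_univ j))

lemma Vnu_subset_box {t : ℕ} {I : Fin t → Ideal R} {J' : Ideal R} {n : Fin t → ℕ}
    (hn : ∀ i, I i ^ n i ≤ J') :
    Vnu I J' ⊆ Set.pi Set.univ (fun i => Set.Iio (n i)) := by
  intro a ha i _
  by_contra h
  simp only [Set.mem_Iio, not_lt] at h
  exact ha (le_trans (prod_le_factor I a i)
    (le_trans (Ideal.pow_le_pow_right h) (hn i)))

lemma Vnu_finite [IsNoetherianRing R] {t : ℕ} {I : Fin t → Ideal R} {J : Ideal R}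
    (hrad : ∀ i, I i ≤ J.radical) (q : ℕ) : (Vnu I (J.frobPow q)).Finite := by
  choose n hn using fun i => pow_le_frobPow (hrad i) q
  exact Set.Finite.subset (Set.Finite.pi (fun i => Set.finite_Iio _)) (Vnu_subset_box hn)

lemma nuF_bddAbove [IsNoetherianRing R] {K J : Ideal R} (hK : K ≤ J.radical) (q : ℕ) :
    BddAbove {n : ℕ | ¬ K ^ n ≤ J.frobPow q} := by
  obtain ⟨n, hn⟩ := pow_le_frobPow hK q
  refine ⟨n, fun m hm => ?_⟩
  by_contra h
  push_neg at h
  exact hm (le_trans (Ideal.pow_le_pow_right (le_of_lt h)) hn)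

lemma ncard_prod_set {α β : Type*} (s : Set α) (u : Set β) :
    (s ×ˢ u).ncard = s.ncard * u.ncard := by
  rw [← Nat.card_coe_set_eq, ← Nat.card_coe_set_eq, ← Nat.card_coe_set_eq,
    Nat.card_congr (Equiv.Set.prod s u), Nat.card_prod]

/-- The key counting estimate: the number of vectors in `Vnu` for `t+1` ideals is at most
the number for the first `t` ideals times `ν + 1` for the last ideal. -/
lemma Vnu_ncard_le {t : ℕ} {I : Fin (t + 1) → Ideal R} {J' : Ideal R}
    (hfin' : (Vnu (fun i : Fin t => I i.castSucc) J').Finite)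
    (hbdd : BddAbove {n : ℕ | ¬ I (Fin.last t) ^ n ≤ J'}) :
    (Vnu I J').ncard ≤
      (Vnu (fun i : Fin t => I i.castSucc) J').ncard * (nuF (I (Fin.last t)) J' + 1) := by
  set ν := nuF (I (Fin.last t)) J'
  set Φ : (Fin (t + 1) → ℕ) → (Fin t → ℕ) × ℕ :=
    fun a => (fun i => a i.castSucc, a (Fin.last t)) with hΦ
  have hinj : Function.Injective Φ := by
    intro a b hab
    obtain ⟨h1, h2⟩ := Prod.mk.injEq .. ▸ hab
    funext i
    refine Fin.lastCases ?_ ?_ i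
    · exact h2
    · exact fun j => congrFun h1 j
  have hsub : Φ '' Vnu I J' ⊆ (Vnu (fun i : Fin t => I i.castSucc) J') ×ˢ Set.Iic ν := by
    rintro _ ⟨a, ha, rfl⟩
    constructor
    · intro hle
      apply ha
      calc (∏ i, I i ^ a i)
          = (∏ i : Fin t, I i.castSucc ^ a i.castSucc) * I (Fin.last t) ^ a (Fin.last t) :=
            Fin.prod_univ_castSucc _
        _ ≤ ∏ i : Fin t, I i.castSucc ^ a i.castSucc := Ideal.mul_le_left
        _ ≤ J' := hle
    · refine le_csSup hbdd ?_
      intro hle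
      exact ha (le_trans (prod_le_factor I a (Fin.last t)) hle)
  calc (Vnu I J').ncard = (Φ '' Vnu I J').ncard :=
        (Set.ncard_image_of_injective _ hinj).symm
    _ ≤ ((Vnu (fun i : Fin t => I i.castSucc) J') ×ˢ Set.Iic ν).ncard :=
        Set.ncard_le_ncard hsub (hfin'.prod (Set.finite_Iic ν))
    _ = (Vnu (fun i : Fin t => I i.castSucc) J').ncard * (Set.Iic ν).ncard :=
        ncard_prod_set _ _
    _ = _ := by rw [← Finset.coe_Iic, Set.ncard_coe_finset, Nat.card_Iic]

end Aux

/-- `Vol_F^J(I₁,…,I_{t+1}) ≤ Vol_F^J(I₁,…,I_t) · c^J(I_{t+1})`. -/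
theorem stmt5 {R : Type*} [CommRing R] [IsNoetherianRing R] (p : ℕ) [Fact p.Prime]
    [CharP R p] {t : ℕ} (I : Fin (t + 1) → Ideal R) (J : Ideal R)
    (hrad : ∀ i, I i ≤ J.radical) (L L' c : ℝ)
    (hL : Tendsto
      (fun e : ℕ => ((Vnu I (J.frobPow (p ^ e))).ncard : ℝ) / (p : ℝ) ^ (e * (t + 1)))
      atTop (nhds L))
    (hL' : Tendsto
      (fun e : ℕ =>
        ((Vnu (fun i : Fin t => I i.castSucc) (J.frobPow (p ^ e))).ncard : ℝ) /
          (p : ℝ) ^ (e * t))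
      atTop (nhds L'))
    (hc : Tendsto (fun e : ℕ => (nuF (I (Fin.last t)) (J.frobPow (p ^ e)) : ℝ) / (p : ℝ) ^ e)
      atTop (nhds c)) :
    L ≤ L' * c := by
  have hp : p.Prime := Fact.out
  have hp1 : (1 : ℝ) < (p : ℝ) := by exact_mod_cast hp.one_lt
  have hp0 : (0 : ℝ) < (p : ℝ) := lt_trans one_pos hp1
  -- abbreviations
  set N : ℕ → ℕ := fun e => (Vnu I (J.frobPow (p ^ e))).ncard with hN
  set N' : ℕ → ℕ := fun e =>
    (Vnu (fun i : Fin t => I i.castSucc) (J.frobPow (p ^ e))).ncard with hN'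
  set ν : ℕ → ℕ := fun e => nuF (I (Fin.last t)) (J.frobPow (p ^ e)) with hν
  -- the comparison sequence
  set F : ℕ → ℝ := fun e => ((N' e : ℝ) / (p : ℝ) ^ (e * t)) * (((ν e : ℝ) + 1) / (p : ℝ) ^ e)
    with hF
  -- F tends to L' * c
  have hinv : Tendsto (fun e : ℕ => ((p : ℝ)⁻¹) ^ e) atTop (nhds 0) :=
    tendsto_pow_atTop_nhds_zero_of_lt_one (inv_nonneg.2 hp0.le) ((inv_lt_one_of_one_lt₀ hp1))
  have htend2 : Tendsto (fun e : ℕ => ((ν e : ℝ) + 1) / (p : ℝ) ^ e) atTop (nhds c) := by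
    have : (fun e : ℕ => ((ν e : ℝ) + 1) / (p : ℝ) ^ e) =
        fun e => (ν e : ℝ) / (p : ℝ) ^ e + ((p : ℝ)⁻¹) ^ e := by
      funext e
      rw [add_div, inv_pow, inv_eq_one_div, one_div]
    rw [this]
    have := hc.add hinv
    simpa using this
  have hFtend : Tendsto F atTop (nhds (L' * c)) := hL'.mul htend2
  -- pointwise bound
  have hbound : ∀ e : ℕ, (N e : ℝ) / (p : ℝ) ^ (e * (t + 1)) ≤ F e := by
    intro e
    have hcard : N e ≤ N' e * (ν e + 1) :=
      Vnu_ncard_le (Vnu_finite (fun i => hrad i.castSucc) (p ^ e))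
        (nuF_bddAbove (hrad (Fin.last t)) (p ^ e))
    have hpow : (p : ℝ) ^ (e * (t + 1)) = (p : ℝ) ^ (e * t) * (p : ℝ) ^ e := by
      rw [← pow_add, Nat.mul_succ]
    have hF' : F e = ((N' e : ℝ) * ((ν e : ℝ) + 1)) / ((p : ℝ) ^ (e * t) * (p : ℝ) ^ e) :=
      div_mul_div_comm _ _ _ _
    rw [hF', hpow]
    apply div_le_div_of_nonneg_right ?_ (by positivity) |>.trans_eq rfl
    · exact_mod_cast hcard
  exact le_of_tendsto_of_tendsto' hL hFtend hbound
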